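/- Asymmetric Lovász Local Lemma lower bound: let A₁, ..., Aₙ be events with dependency graph G, and suppose there exist x₁, ..., xₙ ∈ (0,1) such that P(Aᵢ) ≤ xᵢ · Π_{j ∈ N(i)} (1 - xⱼ) for all i. Then P(⋂ᵢ Āᵢ) ≥ Π_{i=1}^n (1 - xᵢ) > 0. -/
import Mathlib

open MeasureTheory

theorem stmt11 {Ω : Type*} [MeasurableSpace Ω] (μ : Measure Ω) [IsProbabilityMeasure μ]
    (n : ℕ) (A : Fin n → Set Ω) (hA : ∀ i, MeasurableSet (A i))
    (N : Fin n → Finset (Fin n))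
    (hind : ∀ (i : Fin n) (J : Finset (Fin n)), (∀ j ∈ J, j ≠ i ∧ j ∉ N i) →
      μ (A i ∩ ⋂ j ∈ J, (A j)ᶜ) = μ (A i) * μ (⋂ j ∈ J, (A j)ᶜ))
    (x : Fin n → ℝ) (hx : ∀ i, x i ∈ Set.Ioo (0 : ℝ) 1)
    (hP : ∀ i, (μ (A i)).toReal ≤ x i * ∏ j ∈ N i, (1 - x j)) :
    (∏ i, (1 - x i)) ≤ (μ (⋂ i, (A i)ᶜ)).toReal ∧ 0 < μ (⋂ i, (A i)ᶜ) := by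
  set B : Finset (Fin n) → Set Ω := fun S => ⋂ j ∈ S, (A j)ᶜ with hBdef
  have hfin : ∀ s : Set Ω, μ s ≠ ⊤ := fun s => measure_ne_top μ s
  have hBmono : ∀ {S T : Finset (Fin n)}, S ⊆ T → B T ⊆ B S := by
    intro S T h ω hω
    exact Set.mem_iInter₂.2 fun j hj => Set.mem_iInter₂.1 hω j (h hj)
  have hBinsert : ∀ (i : Fin n) (S : Finset (Fin n)), B (insert i S) = B S \ A i := by
    intro i S
    ext ω
    simp only [hBdef, Finset.mem_insert, Set.mem_iInter, Set.mem_compl_iff, Set.mem_diff]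
    constructor
    · intro h; exact ⟨fun j hj => h j (Or.inr hj), h i (Or.inl rfl)⟩
    · rintro ⟨h1, h2⟩ j (rfl | hj)
      · exact h2
      · exact h1 j hj
  have hsplit : ∀ (i : Fin n) (S : Finset (Fin n)),
      (μ (B (insert i S))).toReal = (μ (B S)).toReal - (μ (A i ∩ B S)).toReal := by
    intro i S
    have h := measure_inter_add_diff (μ := μ) (B S) (hA i)
    have h2 := congrArg ENNReal.toReal h
    rw [ENNReal.toReal_add (hfin _) (hfin _)] at h2
    rw [hBinsert i S, Set.inter_comm (A i) (B S)]
    linarith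
  have h1x : ∀ j, 0 < 1 - x j := fun j => by have := (hx j).2; linarith
  have hprodnn : ∀ (T : Finset (Fin n)), (0:ℝ) ≤ ∏ j ∈ T, (1 - x j) :=
    fun T => Finset.prod_nonneg fun j _ => (h1x j).le
  have hmunn : ∀ s : Set Ω, (0:ℝ) ≤ (μ s).toReal := fun s => ENNReal.toReal_nonneg
  have key : ∀ m : ℕ, ∀ S : Finset (Fin n), S.card ≤ m →
      ((∏ j ∈ S, (1 - x j)) ≤ (μ (B S)).toReal ∧
       ∀ i ∉ S, (μ (A i ∩ B S)).toReal ≤ x i * (μ (B S)).toReal) := by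
    intro m
    induction m with
    | zero =>
      intro S hS
      have hSe : S = ∅ := Finset.card_eq_zero.1 (Nat.le_zero.1 hS)
      subst hSe
      have hBu : B ∅ = Set.univ := by simp [hBdef]
      rw [hBu]
      constructor
      · simp
      · intro i _
        simp only [Set.inter_univ, measure_univ, ENNReal.toReal_one, mul_one]
        calc (μ (A i)).toReal ≤ x i * ∏ j ∈ N i, (1 - x j) := hP i
          _ ≤ x i * 1 := by
            have := Finset.prod_le_one (fun j (_ : j ∈ N i) => (h1x j).le)
              (fun j _ => by have := (hx j).1; linarith)
            nlinarith [(hx i).1]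
          _ = x i := mul_one _
    | succ m ih =>
      intro S hS
      -- part (b) first
      have partB : ∀ i ∉ S, (μ (A i ∩ B S)).toReal ≤ x i * (μ (B S)).toReal := by
        intro i hiS
        set S₁ : Finset (Fin n) := S ∩ N i with hS₁
        set S₂ : Finset (Fin n) := S \ N i with hS₂
        have step : ∀ T : Finset (Fin n), T ⊆ S₁ →
            (∏ j ∈ T, (1 - x j)) * (μ (B S₂)).toReal ≤ (μ (B (S₂ ∪ T))).toReal := by
          intro T
          induction T using Finset.induction_on with
          | empty => intro _; simp
          | @insert j T hjT ihT =>
            intro hsub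
            have hjS₁ : j ∈ S₁ := hsub (Finset.mem_insert_self _ _)
            have hjS : j ∈ S := (Finset.mem_inter.1 hjS₁).1
            have hjN : j ∈ N i := (Finset.mem_inter.1 hjS₁).2
            have hTsub : T ⊆ S₁ := (Finset.insert_subset_iff.1 hsub).2
            have hjU : j ∉ S₂ ∪ T := by
              simp only [Finset.mem_union, hS₂, Finset.mem_sdiff]
              rintro (⟨_, h⟩ | h)
              · exact h hjN
              · exact hjT h
            have hUS : S₂ ∪ T ⊆ S := by
              apply Finset.union_subset (Finset.sdiff_subset)
              exact hTsub.trans Finset.inter_subset_left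
            have hUcard : (S₂ ∪ T).card ≤ m := by
              have hlt : (S₂ ∪ T).card < S.card :=
                Finset.card_lt_card ((Finset.ssubset_iff_of_subset hUS).2 ⟨j, hjS, hjU⟩)
              omega
            have hb := (ih (S₂ ∪ T) hUcard).2 j hjU
            have hT := ihT hTsub
            rw [Finset.union_insert, hsplit j (S₂ ∪ T), Finset.prod_insert hjT]
            have h1 := mul_le_mul_of_nonneg_left hT (h1x j).le
            nlinarith [(hx j).1, hmunn (B (S₂ ∪ T))]
        have hU : S₂ ∪ S₁ = S := by
          rw [hS₁, hS₂]; exact Finset.sdiff_union_inter S (N i)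
        have hstep := step S₁ (le_refl _)
        rw [hU] at hstep
        have hmono : (μ (A i ∩ B S)).toReal ≤ (μ (A i ∩ B S₂)).toReal := by
          apply ENNReal.toReal_mono (hfin _)
          exact measure_mono (Set.inter_subset_inter_right _ (hBmono Finset.sdiff_subset))
        have hindep : (μ (A i ∩ B S₂)).toReal = (μ (A i)).toReal * (μ (B S₂)).toReal := by
          have h := hind i S₂ (fun j hj => by
            rw [hS₂, Finset.mem_sdiff] at hj
            exact ⟨fun he => hiS (he ▸ hj.1), hj.2⟩)
          rw [hBdef]
          simp only at h
          rw [h, ENNReal.toReal_mul]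
        have hprodle : ∏ j ∈ N i, (1 - x j) ≤ ∏ j ∈ S₁, (1 - x j) := by
          have hsub1 : S₁ ⊆ N i := Finset.inter_subset_right
          rw [← Finset.prod_sdiff hsub1]
          have hle1 : ∏ j ∈ N i \ S₁, (1 - x j) ≤ 1 :=
            Finset.prod_le_one (fun j _ => (h1x j).le)
              (fun j _ => by have := (hx j).1; linarith)
          nlinarith [hprodnn S₁, hprodnn (N i \ S₁)]
        calc (μ (A i ∩ B S)).toReal ≤ (μ (A i ∩ B S₂)).toReal := hmono
          _ = (μ (A i)).toReal * (μ (B S₂)).toReal := hindep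
          _ ≤ (x i * ∏ j ∈ N i, (1 - x j)) * (μ (B S₂)).toReal :=
            mul_le_mul_of_nonneg_right (hP i) (hmunn _)
          _ ≤ (x i * ∏ j ∈ S₁, (1 - x j)) * (μ (B S₂)).toReal :=
            mul_le_mul_of_nonneg_right
              (mul_le_mul_of_nonneg_left hprodle (hx i).1.le) (hmunn _)
          _ = x i * ((∏ j ∈ S₁, (1 - x j)) * (μ (B S₂)).toReal) := by ring
          _ ≤ x i * (μ (B S)).toReal :=
            mul_le_mul_of_nonneg_left hstep (hx i).1.le
      refine ⟨?_, partB⟩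
      rcases Finset.eq_empty_or_nonempty S with rfl | ⟨i, hi⟩
      · have hBu : B ∅ = Set.univ := by simp [hBdef]
        simp [hBu]
      · have hcard : (S.erase i).card ≤ m := by
          have := Finset.card_erase_of_mem hi
          have := Finset.card_pos.2 ⟨i, hi⟩
          omega
        have hih := ih (S.erase i) hcard
        have hb := hih.2 i (Finset.notMem_erase i S)
        have hins : insert i (S.erase i) = S := Finset.insert_erase hi
        have h1 : (μ (B S)).toReal = (μ (B (S.erase i))).toReal - (μ (A i ∩ B (S.erase i))).toReal := by
          rw [← hins, hsplit i (S.erase i)]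
          rw [hins]
        have hprod : (1 - x i) * ∏ j ∈ S.erase i, (1 - x j) = ∏ j ∈ S, (1 - x j) :=
          Finset.mul_prod_erase S (fun j => 1 - x j) hi
        have h2 := hih.1
        rw [h1, ← hprod]
        nlinarith [(hx i).1, (hx i).2, hprodnn (S.erase i), hmunn (B (S.erase i))]
  have hmain := key (Finset.univ : Finset (Fin n)).card Finset.univ le_rfl
  have hEq : (⋂ i, (A i)ᶜ) = B Finset.univ := by
    simp [hBdef]
  have hprodpos : (0:ℝ) < ∏ i, (1 - x i) :=
    Finset.prod_pos fun i _ => h1x i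
  have h1 : (∏ i, (1 - x i)) ≤ (μ (⋂ i, (A i)ᶜ)).toReal := by
    rw [hEq]; exact hmain.1
  refine ⟨h1, ?_⟩
  have hpos : 0 < (μ (⋂ i, (A i)ᶜ)).toReal := lt_of_lt_of_le hprodpos h1
  exact (ENNReal.toReal_pos_iff.1 hpos).1
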